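/- Let x ∈ (0,∞)^d be a positive histogram with cumulative sum w_x = Σ_{i=1}^d x^i, let x̃ = x/w_x be its normalization, and let h̃ be a frequency histogram with d bins. Then J(x, h̃) = J(x̃, h̃) + (w_x − 1)·( KL(x̃ : h̃) + log w_x ), where J(p,q) = Σ_{i=1}^d (p^i − q^i)·log(p^i/q^i) and KL(p̃ : q̃) = Σ_{i=1}^d p̃^i·log(p̃^i/q̃^i). -/
import Mathlib


open scoped BigOperators

/-- Jeffreys divergence between positive histograms with `d` bins. -/
noncomputable def Jeffreys {d : ℕ} (p q : Fin d → ℝ) : ℝ :=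
  ∑ i, (p i - q i) * Real.log (p i / q i)

/-- Kullback-Leibler term between positive histograms with `d` bins. -/
noncomputable def KL {d : ℕ} (p q : Fin d → ℝ) : ℝ :=
  ∑ i, p i * Real.log (p i / q i)

/-- `J(x, h̃) = J(x̃, h̃) + (w_x − 1)·(KL(x̃ : h̃) + log w_x)` where
`x̃ = x / w_x` is the normalization of the positive histogram `x`. -/
theorem jeffreys_normalization_identity
    (d : ℕ) (x h : Fin d → ℝ) (hx : ∀ i, 0 < x i)
    (hh : ∀ i, 0 < h i) (hh1 : ∑ i, h i = 1) :
    Jeffreys x h =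
      Jeffreys (fun i => x i / ∑ k, x k) h +
        ((∑ i, x i) - 1) * (KL (fun i => x i / ∑ k, x k) h + Real.log (∑ i, x i)) := by
  rcases Nat.eq_zero_or_pos d with hd | hd
  · subst hd; simp [Jeffreys, KL]
  have hne : (Finset.univ : Finset (Fin d)).Nonempty := by
    simp [Finset.univ_nonempty_iff, ← Fin.pos_iff_nonempty, hd]
  set w := ∑ k, x k with hwdef
  have hw : 0 < w := Finset.sum_pos (fun i _ => hx i) hne
  have key : ∀ i, (x i - h i) * Real.log (x i / h i)
      = (x i / w - h i) * Real.log (x i / w / h i)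
        + (w - 1) * (x i / w * Real.log (x i / w / h i))
        + (x i - h i) * Real.log w := by
    intro i
    have hxi0 := hx i
    have hhi0 := hh i
    have hlog : Real.log (x i / h i) = Real.log (x i / w / h i) + Real.log w := by
      rw [← Real.log_mul (by positivity) (ne_of_gt hw)]
      congr 1
      rw [div_div, mul_comm w (h i), ← div_div, div_mul_cancel₀ _ hw.ne']
    rw [hlog]
    set t := x i / w with ht
    have hxi : x i = t * w := by rw [ht]; field_simp
    rw [hxi]
    ring
  unfold Jeffreys KL
  rw [Finset.sum_congr rfl (fun i _ => key i)]
  rw [Finset.sum_add_distrib, Finset.sum_add_distrib, ← Finset.mul_sum, ← Finset.sum_mul,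
    Finset.sum_sub_distrib, hh1]
  ring
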